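/- Let G = (V,E) be a finite simple graph of maximum degree at most Δ ≥ 1, let v₁, v₂ ∈ V be distinct, and suppose every path between v₁ and v₂ in G has more than g vertices. Then for any real α ∈ [1, e), T_{G,v₁,v₂}(ln α/(αΔ)) ≤ (ln α)^{g−1} · α·ln α/(Δ(1 − ln α)). -/

import Mathlib

set_option linter.unusedSectionVars false

open Finset

attribute [local instance] Classical.propDecidable

variable {V : Type} [Fintype V] [DecidableEq V]

/-- Vertex support of an edge set: the non-isolated vertices. -/
def edgeSupp (F : Finset (Sym2 V)) : Finset V :=
  Finset.univ.filter fun v => ∃ e ∈ F, v ∈ e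

/-- `F` is (the edge set of) a subtree of `G`: a connected acyclic edge subset. -/
def IsSubtree (G : SimpleGraph V) (F : Finset (Sym2 V)) : Prop :=
  F ⊆ G.edgeFinset ∧ (SimpleGraph.fromEdgeSet (↑F : Set (Sym2 V))).IsAcyclic ∧
    ∀ a ∈ edgeSupp F, ∀ b ∈ edgeSupp F,
      (SimpleGraph.fromEdgeSet (↑F : Set (Sym2 V))).Reachable a b

/-- The double-rooted tree generating function `T_{G,v₁,v₂}(x)`: the sum of `x^{|T|}` over
all subtrees `T` of `G` whose vertex set contains both `v₁` and `v₂`. -/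
noncomputable def treeSum2 (G : SimpleGraph V) (v₁ v₂ : V) (x : ℝ) : ℝ :=
  ∑ F ∈ G.edgeFinset.powerset.filter
      (fun F => IsSubtree G F ∧ v₁ ∈ edgeSupp F ∧ v₂ ∈ edgeSupp F), x ^ F.card

/-! Auxiliary development -/

def egr (F : Finset (Sym2 V)) : SimpleGraph V := SimpleGraph.fromEdgeSet (↑F : Set (Sym2 V))

def Good (F : Finset (Sym2 V)) : Prop :=
  (∀ e ∈ F, ¬ e.IsDiag) ∧ (egr F).IsAcyclic ∧
    ∀ a ∈ edgeSupp F, ∀ b ∈ edgeSupp F, (egr F).Reachable a b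

noncomputable def Qset (E : Finset (Sym2 V)) (u v : V) : Finset (Finset (Sym2 V)) :=
  E.powerset.filter (fun F => Good F ∧ (F = ∅ ∨ u ∈ edgeSupp F) ∧ (v ∈ edgeSupp F ∨ u = v))

noncomputable def Qsum (E : Finset (Sym2 V)) (u v : V) (x : ℝ) : ℝ :=
  ∑ F ∈ Qset E u v, x ^ F.card

lemma mem_edgeSupp {F : Finset (Sym2 V)} {v : V} : v ∈ edgeSupp F ↔ ∃ e ∈ F, v ∈ e := by
  simp [edgeSupp]

lemma mem_Qset {E : Finset (Sym2 V)} {u v : V} {F : Finset (Sym2 V)} :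
    F ∈ Qset E u v ↔ F ⊆ E ∧ Good F ∧ (F = ∅ ∨ u ∈ edgeSupp F) ∧ (v ∈ edgeSupp F ∨ u = v) := by
  simp [Qset, Finset.mem_filter, Finset.mem_powerset, and_assoc]

lemma egr_adj {F : Finset (Sym2 V)} {a b : V} :
    (egr F).Adj a b ↔ s(a, b) ∈ F ∧ a ≠ b := by
  simp [egr, SimpleGraph.fromEdgeSet_adj]

lemma egr_mono {F F' : Finset (Sym2 V)} (h : F ⊆ F') : egr F ≤ egr F' :=
  SimpleGraph.fromEdgeSet_mono (by exact_mod_cast h)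

lemma isAcyclic_mono {G H : SimpleGraph V} (hle : H ≤ G) (hG : G.IsAcyclic) : H.IsAcyclic := by
  intro v p hp
  exact hG (p.transfer G (fun e he => SimpleGraph.edgeSet_mono hle (p.edges_subset_edgeSet he)))
    (hp.transfer _)

lemma Qsum_nonneg {E : Finset (Sym2 V)} {u v : V} {x : ℝ} (hx : 0 ≤ x) :
    0 ≤ Qsum E u v x :=
  Finset.sum_nonneg fun _ _ => pow_nonneg hx _

lemma Good_empty : Good (∅ : Finset (Sym2 V)) := by
  refine ⟨by simp, ?_, by simp [edgeSupp]⟩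
  intro v p hp
  have : p.length ≠ 0 := hp.three_le_length.trans_lt' (by norm_num) |>.ne'
  cases p with
  | nil => simp at this
  | cons h _ => exact absurd h (by simp [egr])

lemma empty_mem_Qset {E : Finset (Sym2 V)} {v : V} : ∅ ∈ Qset E v v :=
  mem_Qset.mpr ⟨Finset.empty_subset _, Good_empty, Or.inl rfl, Or.inr rfl⟩

/-- all vertices on a walk are reachable from the start. -/
lemma reachable_of_mem_support {G : SimpleGraph V} {a b c : V} (p : G.Walk a b)
    (hc : c ∈ p.support) : G.Reachable a c := by
  induction p with
  | nil => simp at hc; exact hc ▸ SimpleGraph.Reachable.refl _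
  | @cons a a' b h q ih =>
    rcases (SimpleGraph.Walk.mem_support_iff _).mp hc with rfl | hc'
    · exact SimpleGraph.Reachable.refl _
    · exact (SimpleGraph.Adj.reachable h).trans (ih hc')

lemma mem_support_of_mem_edge {G : SimpleGraph V} {a b c : V} {d : Sym2 V} (p : G.Walk a b)
    (hd : d ∈ p.edges) (hc : c ∈ d) : c ∈ p.support := by
  induction d with
  | _ x y =>
    rcases Sym2.mem_iff.mp hc with rfl | rfl
    · exact p.fst_mem_support_of_mem_edges hd
    · exact p.snd_mem_support_of_mem_edges hd

/-- a nonnil walk has an edge containing its end. -/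
lemma exists_edge_end {G : SimpleGraph V} {a b : V} (p : G.Walk a b) (hab : a ≠ b) :
    ∃ d ∈ p.edges, b ∈ d := by
  induction p with
  | nil => exact absurd rfl hab
  | @cons x y z h q ih =>
    by_cases hyz : y = z
    · subst hyz; exact ⟨s(x, y), by simp, by simp⟩
    · obtain ⟨d, hd, hbd⟩ := ih hyz
      exact ⟨d, by simp [hd], hbd⟩

lemma exists_edge_start {G : SimpleGraph V} {a b : V} (p : G.Walk a b) (hab : a ≠ b) :
    ∃ d ∈ p.edges, a ∈ d := by
  obtain ⟨d, hd, hbd⟩ := exists_edge_end p.reverse hab.symm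
  exact ⟨d, by simpa using hd, hbd⟩

/-! Splitting a tree at an edge -/

noncomputable def sideU (e : Sym2 V) (u : V) (F : Finset (Sym2 V)) : Finset (Sym2 V) :=
  (F.erase e).filter (fun d => ∀ a ∈ d, (egr (F.erase e)).Reachable u a)

noncomputable def sideV (e : Sym2 V) (u : V) (F : Finset (Sym2 V)) : Finset (Sym2 V) :=
  (F.erase e).filter (fun d => ¬ ∀ a ∈ d, (egr (F.erase e)).Reachable u a)

section Split

variable {F : Finset (Sym2 V)} {v u : V}

lemma split_bridge (hG : Good F) (he : s(v, u) ∈ F) (hvu : v ≠ u) :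
    ¬ (egr (F.erase s(v, u))).Reachable v u := by
  have hadj : (egr F).Adj v u := egr_adj.mpr ⟨he, hvu⟩
  have hb := (SimpleGraph.isAcyclic_iff_forall_adj_isBridge.mp hG.2.1) hadj
  rw [SimpleGraph.isBridge_iff] at hb
  intro hreach
  refine hb (hreach.mono (?_ : egr (F.erase s(v, u)) ≤ egr F \ SimpleGraph.fromEdgeSet {s(v, u)}))
  intro a b hab
  rw [egr_adj] at hab
  constructor
  · exact egr_adj.mpr ⟨Finset.mem_of_mem_erase hab.1, hab.2⟩
  · rw [SimpleGraph.fromEdgeSet_adj]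
    rintro ⟨habe, -⟩
    exact (Finset.ne_of_mem_erase hab.1) habe

lemma split_pair_reach (hG : Good F) {e d : Sym2 V} (hd : d ∈ F.erase e) {a b : V}
    (ha : a ∈ d) (hb : b ∈ d) : (egr (F.erase e)).Reachable a b := by
  induction d with
  | _ x y =>
    have hxy : x ≠ y := by
      intro h
      exact hG.1 _ (Finset.mem_of_mem_erase hd) (by simp [h, Sym2.mk_isDiag_iff])
    have hadj : (egr (F.erase e)).Adj x y := egr_adj.mpr ⟨hd, hxy⟩
    rcases Sym2.mem_iff.mp ha with rfl | rfl <;> rcases Sym2.mem_iff.mp hb with rfl | rfl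
    · exact SimpleGraph.Reachable.refl _
    · exact hadj.reachable
    · exact hadj.symm.reachable
    · exact SimpleGraph.Reachable.refl _

lemma mem_sideV_iff (hG : Good F) {e d : Sym2 V} :
    d ∈ sideV e u F ↔ d ∈ F.erase e ∧ ∀ a ∈ d, ¬ (egr (F.erase e)).Reachable u a := by
  unfold sideV
  rw [Finset.mem_filter]
  constructor
  · rintro ⟨hd, hnall⟩
    refine ⟨hd, fun a ha hreach => hnall (fun b hb => hreach.trans (split_pair_reach hG hd ha hb))⟩
  · rintro ⟨hd, hall⟩
    refine ⟨hd, fun hforall => ?_⟩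
    induction d with
    | _ x y => exact hall x (by simp) (hforall x (by simp))

lemma walk_edges_mem_sideU {e : Sym2 V} {c : V} (p : (egr (F.erase e)).Walk u c) :
    ∀ d ∈ p.edges, d ∈ sideU e u F := by
  intro d hd
  have hd' : d ∈ (egr (F.erase e)).edgeSet := p.edges_subset_edgeSet hd
  rw [egr, SimpleGraph.edgeSet_fromEdgeSet] at hd'
  have hdF : d ∈ F.erase e := by exact_mod_cast hd'.1
  refine Finset.mem_filter.mpr ⟨hdF, fun a ha => ?_⟩
  exact reachable_of_mem_support p (mem_support_of_mem_edge p hd ha)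

lemma walk_to_H {a b : V} {e : Sym2 V} (p : (egr F).Walk a b) (he : e ∉ p.edges) :
    ∀ d ∈ p.edges, d ∈ (egr (F.erase e)).edgeSet := by
  intro d hd
  have hd' : d ∈ (egr F).edgeSet := p.edges_subset_edgeSet hd
  rw [egr, SimpleGraph.edgeSet_fromEdgeSet] at hd' ⊢
  refine ⟨?_, hd'.2⟩
  have hdF : d ∈ F := by exact_mod_cast hd'.1
  show d ∈ (↑(F.erase e) : Set (Sym2 V))
  exact_mod_cast Finset.mem_erase.mpr ⟨by rintro rfl; exact he hd, hdF⟩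

lemma pathV_edges (hG : Good F) (he : s(v, u) ∈ F) :
    ∀ {a b : V} (p : (egr F).Walk a b), p.IsPath →
      ¬ (egr (F.erase s(v, u))).Reachable u a →
      ¬ (egr (F.erase s(v, u))).Reachable u b →
      ∀ d ∈ p.edges, d ∈ sideV s(v, u) u F := by
  intro a b p
  induction p with
  | nil => intro _ _ _ d hd; simp at hd
  | @cons a c b hadj q ih =>
    intro hp hra hrb d hd
    have hq : q.IsPath := hp.of_cons
    have hacF : s(a, c) ∈ F ∧ a ≠ c := egr_adj.mp hadj
    by_cases hcase : s(a, c) = s(v, u)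
    · exfalso
      have hau : a ≠ u := fun h => hra (h ▸ SimpleGraph.Reachable.refl _)
      have hav : a = v := by
        rcases Sym2.eq_iff.mp hcase with h | h
        · exact h.1
        · exact absurd h.1 hau
      have hcu : c = u := by
        rcases Sym2.eq_iff.mp hcase with h | h
        · exact h.2
        · exact absurd h.1 hau
      have hnotsup : a ∉ q.support := ((SimpleGraph.Walk.cons_isPath_iff hadj q).mp hp).2
      have henotq : s(v, u) ∉ q.edges := fun hmem =>
        hnotsup (mem_support_of_mem_edge q hmem (by rw [hav]; simp))
      have q' := q.transfer _ (walk_to_H q henotq)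
      exact hrb ⟨q'.copy hcu rfl⟩
    · have hdmem : s(a, c) ∈ F.erase s(v, u) := Finset.mem_erase.mpr ⟨hcase, hacF.1⟩
      have hrc : ¬ (egr (F.erase s(v, u))).Reachable u c := by
        intro hr
        exact hra (hr.trans (split_pair_reach hG hdmem (by simp) (by simp)))
      rcases (by simpa using hd : d = s(a, c) ∨ d ∈ q.edges) with rfl | hd'
      · rw [mem_sideV_iff hG]
        refine ⟨hdmem, fun x hx => ?_⟩
        rcases Sym2.mem_iff.mp hx with rfl | rfl
        · exact hra
        · exact hrc
      · exact ih hq hrc hrb d hd'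

end Split

section Split2

variable {F : Finset (Sym2 V)} {v u : V}

lemma sideU_subset {e : Sym2 V} : sideU e u F ⊆ F.erase e := Finset.filter_subset _ _
lemma sideV_subset {e : Sym2 V} : sideV e u F ⊆ F.erase e := Finset.filter_subset _ _

lemma side_union {e : Sym2 V} : sideU e u F ∪ sideV e u F = F.erase e :=
  Finset.filter_union_filter_not_eq _ _

lemma split_card (he : s(v, u) ∈ F) :
    F.card = 1 + (sideU s(v, u) u F).card + (sideV s(v, u) u F).card := by
  have h1 : (sideU s(v, u) u F).card + (sideV s(v, u) u F).card = (F.erase s(v, u)).card :=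
    Finset.card_filter_add_card_filter_not _
  have h2 : (F.erase s(v, u)).card + 1 = F.card := Finset.card_erase_add_one he
  omega

lemma split_reconstruct (he : s(v, u) ∈ F) :
    F = insert s(v, u) (sideU s(v, u) u F ∪ sideV s(v, u) u F) := by
  rw [side_union, Finset.insert_erase he]

lemma sideU_avoid (hG : Good F) (he : s(v, u) ∈ F) (hvu : v ≠ u) :
    ∀ d ∈ sideU s(v, u) u F, v ∉ d := by
  intro d hd hvd
  have := (Finset.mem_filter.mp hd).2 v hvd
  exact split_bridge hG he hvu this.symm

lemma sideU_supp_reach {e : Sym2 V} :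
    ∀ a ∈ edgeSupp (sideU e u F), (egr (F.erase e)).Reachable u a := by
  intro a ha
  obtain ⟨d, hd, had⟩ := mem_edgeSupp.mp ha
  exact (Finset.mem_filter.mp hd).2 a had

lemma sideV_supp_nreach (hG : Good F) {e : Sym2 V} :
    ∀ a ∈ edgeSupp (sideV e u F), ¬ (egr (F.erase e)).Reachable u a := by
  intro a ha
  obtain ⟨d, hd, had⟩ := mem_edgeSupp.mp ha
  exact ((mem_sideV_iff hG).mp hd).2 a had

lemma good_sideU (hG : Good F) {e : Sym2 V} : Good (sideU e u F) := by
  refine ⟨fun d hd => hG.1 d (Finset.mem_of_mem_erase (sideU_subset hd)), ?_, ?_⟩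
  · exact isAcyclic_mono
      (egr_mono (sideU_subset.trans (Finset.erase_subset _ _))) hG.2.1
  · intro a ha b hb
    have hra := sideU_supp_reach a ha
    have hrb := sideU_supp_reach b hb
    obtain ⟨w⟩ := hra.symm.trans hrb
    have w0 : (egr (F.erase e)).Walk u a := hra.some
    have hall := walk_edges_mem_sideU (w0.append w)
    refine ⟨w.transfer _ ?_⟩
    intro d hd
    have hd' : d ∈ sideU e u F := hall d (by
      simp only [SimpleGraph.Walk.edges_append, List.mem_append]
      right; exact hd)
    rw [egr, SimpleGraph.edgeSet_fromEdgeSet]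
    refine ⟨by exact_mod_cast hd', fun hdg => hG.1 d (Finset.mem_of_mem_erase (sideU_subset hd')) hdg⟩

lemma good_sideV (hG : Good F) (he : s(v, u) ∈ F) : Good (sideV s(v, u) u F) := by
  refine ⟨fun d hd => hG.1 d (Finset.mem_of_mem_erase (sideV_subset hd)), ?_, ?_⟩
  · exact isAcyclic_mono
      (egr_mono (sideV_subset.trans (Finset.erase_subset _ _))) hG.2.1
  · intro a ha b hb
    have hra := sideV_supp_nreach hG a ha
    have hrb := sideV_supp_nreach hG b hb
    have haF : a ∈ edgeSupp F := by
      obtain ⟨d, hd, had⟩ := mem_edgeSupp.mp ha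
      exact mem_edgeSupp.mpr ⟨d, Finset.mem_of_mem_erase (sideV_subset hd), had⟩
    have hbF : b ∈ edgeSupp F := by
      obtain ⟨d, hd, had⟩ := mem_edgeSupp.mp hb
      exact mem_edgeSupp.mpr ⟨d, Finset.mem_of_mem_erase (sideV_subset hd), had⟩
    obtain ⟨w⟩ := hG.2.2 a haF b hbF
    have hpath := w.toPath.2
    have hedges := pathV_edges hG he (w.toPath : (egr F).Walk a b) hpath hra hrb
    refine ⟨(w.toPath : (egr F).Walk a b).transfer _ ?_⟩
    intro d hd
    have hd' := hedges d hd
    rw [egr, SimpleGraph.edgeSet_fromEdgeSet]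
    exact ⟨by exact_mod_cast hd', fun hdg => hG.1 d (Finset.mem_of_mem_erase (sideV_subset hd')) hdg⟩

end Split2

section Split3

variable {F : Finset (Sym2 V)} {v u : V}

lemma sideU_supp (hG : Good F) {e : Sym2 V} :
    sideU e u F = ∅ ∨ u ∈ edgeSupp (sideU e u F) := by
  by_cases h : sideU e u F = ∅
  · exact Or.inl h
  · right
    obtain ⟨d, hd⟩ := Finset.nonempty_iff_ne_empty.mpr h
    obtain ⟨a, had⟩ : ∃ a, a ∈ d := by
      induction d with
      | _ x y => exact ⟨x, by simp⟩
    have hra : (egr (F.erase e)).Reachable u a := (Finset.mem_filter.mp hd).2 a had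
    by_cases hua : u = a
    · exact mem_edgeSupp.mpr ⟨d, hd, hua ▸ had⟩
    · obtain ⟨w⟩ := hra
      obtain ⟨d', hd', hud'⟩ := exists_edge_start w hua
      exact mem_edgeSupp.mpr ⟨d', walk_edges_mem_sideU w d' hd', hud'⟩

lemma sideU_v2 (hG : Good F) {e : Sym2 V} {w₂ : V}
    (hr : (egr (F.erase e)).Reachable u w₂) (hne : u ≠ w₂) :
    w₂ ∈ edgeSupp (sideU e u F) := by
  obtain ⟨w⟩ := hr
  obtain ⟨d, hd, hwd⟩ := exists_edge_end w hne
  exact mem_edgeSupp.mpr ⟨d, walk_edges_mem_sideU w d hd, hwd⟩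

lemma sideV_supp (hG : Good F) (he : s(v, u) ∈ F) (hvu : v ≠ u) :
    sideV s(v, u) u F = ∅ ∨ v ∈ edgeSupp (sideV s(v, u) u F) := by
  by_cases h : sideV s(v, u) u F = ∅
  · exact Or.inl h
  · right
    obtain ⟨d, hd⟩ := Finset.nonempty_iff_ne_empty.mpr h
    obtain ⟨a, had⟩ : ∃ a, a ∈ d := by
      induction d with
      | _ x y => exact ⟨x, by simp⟩
    have hra : ¬ (egr (F.erase s(v, u))).Reachable u a := ((mem_sideV_iff hG).mp hd).2 a had
    have hrv : ¬ (egr (F.erase s(v, u))).Reachable u v := fun hr => split_bridge hG he hvu hr.symm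
    by_cases hva : v = a
    · exact mem_edgeSupp.mpr ⟨d, hd, hva ▸ had⟩
    · have haF : a ∈ edgeSupp F :=
        mem_edgeSupp.mpr ⟨d, Finset.mem_of_mem_erase (sideV_subset hd), had⟩
      have hvF : v ∈ edgeSupp F := mem_edgeSupp.mpr ⟨s(v, u), he, by simp⟩
      obtain ⟨w⟩ := hG.2.2 a haF v hvF
      have hedges := pathV_edges hG he (w.toPath : (egr F).Walk a v) w.toPath.2
        (fun hr => hra hr) hrv
      obtain ⟨d', hd', hvd'⟩ :=
        exists_edge_end (w.toPath : (egr F).Walk a v) (fun hav => hva hav.symm)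
      exact mem_edgeSupp.mpr ⟨d', hedges d' hd', hvd'⟩

end Split3

/-! Sum inequalities -/

lemma sum_biUnion_le_sum {ι β : Type*} [DecidableEq ι] [DecidableEq β] (s : Finset ι)
    (f : ι → Finset β) (g : β → ℝ) (hg : ∀ b, 0 ≤ g b) :
    ∑ b ∈ s.biUnion f, g b ≤ ∑ i ∈ s, ∑ b ∈ f i, g b := by
  induction s using Finset.induction_on with
  | empty => simp
  | @insert a s ha ih =>
    rw [Finset.biUnion_insert, Finset.sum_insert ha]
    calc ∑ b ∈ f a ∪ s.biUnion f, g b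
        ≤ ∑ b ∈ f a, g b + ∑ b ∈ s.biUnion f, g b := by
          have h : (∑ b ∈ f a ∪ s.biUnion f, g b) + ∑ b ∈ f a ∩ s.biUnion f, g b
              = (∑ b ∈ f a, g b) + ∑ b ∈ s.biUnion f, g b := Finset.sum_union_inter
          have h2 : 0 ≤ ∑ b ∈ f a ∩ s.biUnion f, g b := Finset.sum_nonneg fun b _ => hg b
          linarith
      _ ≤ ∑ b ∈ f a, g b + ∑ i ∈ s, ∑ b ∈ f i, g b := by linarith [ih]

lemma split_sum_le {x : ℝ} (hx : 0 ≤ x) (v u : V)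
    (S A B : Finset (Finset (Sym2 V)))
    (hmem : ∀ F ∈ S, s(v, u) ∈ F ∧ sideU s(v, u) u F ∈ A ∧ sideV s(v, u) u F ∈ B) :
    ∑ F ∈ S, x ^ F.card ≤ x * (∑ F ∈ A, x ^ F.card) * (∑ F ∈ B, x ^ F.card) := by
  classical
  set e := s(v, u) with he
  set Φ : Finset (Sym2 V) → Finset (Sym2 V) × Finset (Sym2 V) :=
    fun F => (sideU e u F, sideV e u F) with hΦ
  have hinj : ∀ F₁ ∈ S, ∀ F₂ ∈ S, Φ F₁ = Φ F₂ → F₁ = F₂ := by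
    intro F₁ h₁ F₂ h₂ heq
    have e₁ := split_reconstruct (hmem F₁ h₁).1
    have e₂ := split_reconstruct (hmem F₂ h₂).1
    rw [e₁, e₂]
    have hu : sideU e u F₁ = sideU e u F₂ := congrArg Prod.fst heq
    have hv : sideV e u F₁ = sideV e u F₂ := congrArg Prod.snd heq
    rw [hu, hv]
  have hterm : ∀ F ∈ S, x ^ F.card = x * x ^ (Φ F).1.card * x ^ (Φ F).2.card := by
    intro F hF
    rw [split_card (hmem F hF).1]
    ring
  calc ∑ F ∈ S, x ^ F.card
      = ∑ F ∈ S, (x * x ^ (Φ F).1.card * x ^ (Φ F).2.card) := Finset.sum_congr rfl hterm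
    _ = ∑ p ∈ S.image Φ, (x * x ^ p.1.card * x ^ p.2.card) := by rw [Finset.sum_image hinj]
    _ ≤ ∑ p ∈ A ×ˢ B, (x * x ^ p.1.card * x ^ p.2.card) := by
        refine Finset.sum_le_sum_of_subset_of_nonneg ?_ (fun p _ _ => ?_)
        · intro p hp
          obtain ⟨F, hF, rfl⟩ := Finset.mem_image.mp hp
          exact Finset.mem_product.mpr ⟨(hmem F hF).2.1, (hmem F hF).2.2⟩
        · positivity
    _ = x * (∑ F ∈ A, x ^ F.card) * (∑ F ∈ B, x ^ F.card) := by
        rw [Finset.sum_product]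
        rw [mul_assoc, Finset.sum_mul_sum, Finset.mul_sum]
        refine Finset.sum_congr rfl fun a _ => ?_
        rw [Finset.mul_sum]
        exact Finset.sum_congr rfl fun b _ => by ring

/-! Recursion steps -/

lemma Qset_erase (E : Finset (Sym2 V)) (u v : V) (e : Sym2 V) :
    Qset (E.erase e) u v = (Qset E u v).filter (fun F => e ∉ F) := by
  ext F
  simp only [mem_Qset, Finset.mem_filter, mem_Qset, Finset.subset_erase]
  tauto

lemma Qsum_R_step {x : ℝ} (hx : 0 ≤ x) (E : Finset (Sym2 V)) (v u : V)
    (hvu : v ≠ u) (he : s(v, u) ∈ E) :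
    Qsum E v v x ≤
      (1 + x * Qsum (E.filter (fun d => v ∉ d)) u u x) * Qsum (E.erase s(v, u)) v v x := by
  classical
  set e := s(v, u) with hedef
  have hsplit : Qsum E v v x =
      (∑ F ∈ (Qset E v v).filter (fun F => e ∈ F), x ^ F.card) +
      (∑ F ∈ (Qset E v v).filter (fun F => e ∉ F), x ^ F.card) := by
    rw [Qsum, ← Finset.sum_filter_add_sum_filter_not (Qset E v v) (fun F => e ∈ F)]
  have h2 : (∑ F ∈ (Qset E v v).filter (fun F => e ∉ F), x ^ F.card)
      = Qsum (E.erase e) v v x := by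
    rw [Qsum, Qset_erase]
  have h1 : (∑ F ∈ (Qset E v v).filter (fun F => e ∈ F), x ^ F.card)
      ≤ x * Qsum (E.filter (fun d => v ∉ d)) u u x * Qsum (E.erase e) v v x := by
    refine split_sum_le hx v u _ _ _ ?_
    intro F hF
    rw [Finset.mem_filter] at hF
    obtain ⟨hFQ, heF⟩ := hF
    rw [mem_Qset] at hFQ
    obtain ⟨hFE, hG, -, -⟩ := hFQ
    refine ⟨heF, ?_, ?_⟩
    · rw [mem_Qset]
      refine ⟨?_, good_sideU hG, sideU_supp hG, Or.inr rfl⟩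
      intro d hd
      refine Finset.mem_filter.mpr ⟨hFE (Finset.mem_of_mem_erase (sideU_subset hd)), ?_⟩
      exact sideU_avoid hG heF hvu d hd
    · rw [mem_Qset]
      refine ⟨?_, good_sideV hG heF, sideV_supp hG heF hvu, Or.inr rfl⟩
      intro d hd
      have hd2 := sideV_subset hd
      exact Finset.mem_erase.mpr ⟨Finset.ne_of_mem_erase hd2, hFE (Finset.mem_of_mem_erase hd2)⟩
  have hQv : 0 ≤ Qsum (E.erase e) v v x := Qsum_nonneg hx
  calc Qsum E v v x
      ≤ x * Qsum (E.filter (fun d => v ∉ d)) u u x * Qsum (E.erase e) v v x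
        + Qsum (E.erase e) v v x := by rw [hsplit, h2]; linarith
    _ = (1 + x * Qsum (E.filter (fun d => v ∉ d)) u u x) * Qsum (E.erase e) v v x := by ring

lemma Qsum_P_step {x : ℝ} (hx : 0 ≤ x) (E : Finset (Sym2 V)) (v₁ v₂ : V) (hne : v₁ ≠ v₂) :
    Qsum E v₁ v₂ x ≤
      ∑ u ∈ Finset.univ.filter (fun u => s(v₁, u) ∈ E ∧ v₁ ≠ u),
        x * Qsum (E.filter (fun d => v₁ ∉ d)) u v₂ x * Qsum E v₁ v₁ x := by
  classical
  set N := Finset.univ.filter (fun u => s(v₁, u) ∈ E ∧ v₁ ≠ u) with hN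
  set Su : V → Finset (Finset (Sym2 V)) := fun u =>
    (Qset E v₁ v₂).filter
      (fun F => s(v₁, u) ∈ F ∧ (egr (F.erase s(v₁, u))).Reachable u v₂) with hSu
  have hcover : Qset E v₁ v₂ ⊆ N.biUnion Su := by
    intro F hF
    have hFQ := mem_Qset.mp hF
    obtain ⟨hFE, hG, hv1, hv2⟩ := hFQ
    have hv2' : v₂ ∈ edgeSupp F := hv2.resolve_right hne
    have hFne : F ≠ ∅ := by
      obtain ⟨d, hd, -⟩ := mem_edgeSupp.mp hv2'
      intro h; rw [h] at hd; simp at hd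
    have hv1' : v₁ ∈ edgeSupp F := hv1.resolve_left hFne
    obtain ⟨w⟩ := hG.2.2 v₁ hv1' v₂ hv2'
    have hpath : (w.toPath : (egr F).Walk v₁ v₂).IsPath := w.toPath.2
    cases hq : (w.toPath : (egr F).Walk v₁ v₂) with
    | nil => exact absurd rfl hne
    | @cons _ c _ hadj q =>
      have hadj' := egr_adj.mp hadj
      have hpath2 : (SimpleGraph.Walk.cons hadj q).IsPath := by rw [← hq]; exact hpath
      have henotq : s(v₁, c) ∉ q.edges := by
        intro hmem
        have hns : v₁ ∉ q.support := ((SimpleGraph.Walk.cons_isPath_iff hadj q).mp hpath2).2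
        exact hns (mem_support_of_mem_edge q hmem (by simp))
      have hreach : (egr (F.erase s(v₁, c))).Reachable c v₂ :=
        ⟨q.transfer _ (walk_to_H q henotq)⟩
      refine Finset.mem_biUnion.mpr ⟨c, ?_, ?_⟩
      · exact Finset.mem_filter.mpr ⟨Finset.mem_univ _, hFE hadj'.1, hadj'.2⟩
      · exact Finset.mem_filter.mpr ⟨hF, hadj'.1, hreach⟩
  calc Qsum E v₁ v₂ x
      ≤ ∑ F ∈ N.biUnion Su, x ^ F.card :=
        Finset.sum_le_sum_of_subset_of_nonneg hcover (fun _ _ _ => pow_nonneg hx _)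
    _ ≤ ∑ u ∈ N, ∑ F ∈ Su u, x ^ F.card :=
        sum_biUnion_le_sum N Su _ (fun F => pow_nonneg hx _)
    _ ≤ ∑ u ∈ N, x * Qsum (E.filter (fun d => v₁ ∉ d)) u v₂ x * Qsum E v₁ v₁ x := by
        refine Finset.sum_le_sum ?_
        intro u hu
        have hvu : v₁ ≠ u := (Finset.mem_filter.mp hu).2.2
        refine split_sum_le hx v₁ u _ _ _ ?_
        intro F hF
        rw [hSu, Finset.mem_filter] at hF
        obtain ⟨hFQ, heF, hreach⟩ := hF
        rw [mem_Qset] at hFQ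
        obtain ⟨hFE, hG, -, -⟩ := hFQ
        refine ⟨heF, ?_, ?_⟩
        · rw [mem_Qset]
          refine ⟨?_, good_sideU hG, sideU_supp hG, ?_⟩
          · intro d hd
            exact Finset.mem_filter.mpr ⟨hFE (Finset.mem_of_mem_erase (sideU_subset hd)),
              sideU_avoid hG heF hvu d hd⟩
          · by_cases huv2 : u = v₂
            · exact Or.inr huv2
            · exact Or.inl (sideU_v2 hG hreach huv2)
        · rw [mem_Qset]
          exact ⟨fun d hd => hFE (Finset.mem_of_mem_erase (sideV_subset hd)),
            good_sideV hG heF, sideV_supp hG heF hvu, Or.inr rfl⟩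

/-! Degree facts and the rooted bound -/

lemma Qsum_deg_zero {E : Finset (Sym2 V)} {v : V} {x : ℝ}
    (h0 : (E.filter (fun d => v ∈ d)).card = 0) : Qsum E v v x = 1 := by
  have : Qset E v v = {∅} := by
    ext F
    simp only [Finset.mem_singleton]
    constructor
    · intro hF
      obtain ⟨hFE, hG, hsup, -⟩ := mem_Qset.mp hF
      rcases hsup with h | h
      · exact h
      · exfalso
        obtain ⟨d, hd, hvd⟩ := mem_edgeSupp.mp h
        have hmem : d ∈ E.filter (fun d => v ∈ d) := Finset.mem_filter.mpr ⟨hFE hd, hvd⟩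
        rw [Finset.card_eq_zero] at h0
        rw [h0] at hmem
        simp at hmem
    · rintro rfl; exact empty_mem_Qset
  rw [Qsum, this]
  simp

lemma R_bound (Δ : ℕ) {x α : ℝ} (hx : 0 ≤ x) (hα : 1 ≤ α)
    (hxa : (1 + x * α) ^ Δ ≤ α) :
    ∀ n (E : Finset (Sym2 V)), E.card ≤ n → (∀ e ∈ E, ¬ e.IsDiag) →
      (∀ w : V, (E.filter (fun d => w ∈ d)).card ≤ Δ) →
      ∀ v, Qsum E v v x ≤ (1 + x * α) ^ ((E.filter (fun d => v ∈ d)).card) := by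
  have hbase : (1:ℝ) ≤ 1 + x * α := by nlinarith
  intro n
  induction n with
  | zero =>
    intro E hcard _ _ v
    have : E = ∅ := Finset.card_eq_zero.mp (Nat.le_zero.mp hcard)
    subst this
    rw [Qsum_deg_zero (by simp)]
    simp
  | succ n ih =>
    intro E hcard hdiag hdeg v
    by_cases h0 : (E.filter (fun d => v ∈ d)).card = 0
    · rw [Qsum_deg_zero h0, h0]; simp
    · obtain ⟨e, he⟩ := Finset.card_pos.mp (Nat.pos_of_ne_zero h0)
      obtain ⟨heE, hve⟩ := Finset.mem_filter.mp he
      obtain ⟨u, rfl⟩ := Sym2.mem_iff_exists.mp hve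
      have hvu : v ≠ u := by
        intro h
        exact hdiag _ heE (by rw [h]; simp)
      have hE' : (E.filter (fun d => v ∉ d)).card ≤ n := by
        have hss : E.filter (fun d => v ∉ d) ⊂ E := by
          refine Finset.ssubset_iff_of_subset (Finset.filter_subset _ _) |>.mpr ?_
          exact ⟨s(v, u), heE, by simp⟩
        have := Finset.card_lt_card hss
        omega
      have hEe : (E.erase s(v, u)).card ≤ n := by
        have h1 := Finset.card_erase_of_mem heE
        have h2 : 1 ≤ E.card := Finset.card_pos.mpr ⟨_, heE⟩
        omega
      have hdiag' : ∀ d ∈ E.filter (fun d => v ∉ d), ¬ d.IsDiag :=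
        fun d hd => hdiag d (Finset.mem_filter.mp hd).1
      have hdiagEe : ∀ d ∈ E.erase s(v, u), ¬ d.IsDiag :=
        fun d hd => hdiag d (Finset.mem_of_mem_erase hd)
      have hdeg' : ∀ w : V, ((E.filter (fun d => v ∉ d)).filter (fun d => w ∈ d)).card ≤ Δ :=
        fun w => le_trans (Finset.card_le_card
          (Finset.filter_subset_filter _ (Finset.filter_subset _ _))) (hdeg w)
      have hdegEe : ∀ w : V, ((E.erase s(v, u)).filter (fun d => w ∈ d)).card ≤ Δ :=
        fun w => le_trans (Finset.card_le_card
          (Finset.filter_subset_filter _ (Finset.erase_subset _ _))) (hdeg w)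
      have hRu : Qsum (E.filter (fun d => v ∉ d)) u u x ≤ α := by
        refine le_trans (ih _ hE' hdiag' hdeg' u) (le_trans ?_ hxa)
        exact pow_le_pow_right₀ hbase (hdeg' u)
      have hRv : Qsum (E.erase s(v, u)) v v x
          ≤ (1 + x * α) ^ ((E.filter (fun d => v ∈ d)).card - 1) := by
        have hfe : (E.erase s(v, u)).filter (fun d => v ∈ d)
            = (E.filter (fun d => v ∈ d)).erase s(v, u) := by
          ext d
          simp only [Finset.mem_erase, Finset.mem_filter]
          tauto
        have hce : ((E.erase s(v, u)).filter (fun d => v ∈ d)).card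
            = (E.filter (fun d => v ∈ d)).card - 1 := by
          rw [hfe, Finset.card_erase_of_mem he]
        rw [← hce]
        exact ih _ hEe hdiagEe hdegEe v
      have hstep := Qsum_R_step hx E v u hvu heE
      have hfinal : (1 + x * Qsum (E.filter (fun d => v ∉ d)) u u x)
            * Qsum (E.erase s(v, u)) v v x
          ≤ (1 + x * α) * (1 + x * α) ^ ((E.filter (fun d => v ∈ d)).card - 1) := by
        refine mul_le_mul ?_ hRv (Qsum_nonneg hx) (by positivity)
        have := mul_le_mul_of_nonneg_left hRu hx
        linarith
      refine le_trans hstep (le_trans hfinal ?_)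
      rw [← pow_succ']
      have : (E.filter (fun d => v ∈ d)).card - 1 + 1 = (E.filter (fun d => v ∈ d)).card := by
        omega
      rw [this]

/-! Arithmetic helpers -/

lemma arithB {Δr α L : ℝ} (hΔr : 1 ≤ Δr) (hα : 1 ≤ α) (hL0 : 0 ≤ L) (hL1 : L < 1)
    {m m' : ℕ} (hm : m ≤ 1 + m') :
    Δr * ((L / (Δr * α)) * (α * L ^ m' / (Δr * (1 - L))) * α) ≤ α * L ^ m / (Δr * (1 - L)) := by
  have h1L : 0 < 1 - L := by linarith
  have hΔ0 : 0 < Δr := by linarith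
  have hα0 : 0 < α := by linarith
  have hpow : L ^ (1 + m') ≤ L ^ m := pow_le_pow_of_le_one hL0 hL1.le hm
  have heq : Δr * ((L / (Δr * α)) * (α * L ^ m' / (Δr * (1 - L))) * α)
      = α * L ^ (1 + m') / (Δr * (1 - L)) := by
    rw [pow_add, pow_one]
    field_simp
  rw [heq]
  exact (div_le_div_iff_of_pos_right (by positivity)).mpr (mul_le_mul_of_nonneg_left hpow hα0.le)

lemma arithA {Δr α L : ℝ} (hΔr : 1 ≤ Δr) (hα : 1 ≤ α) (hL0 : 0 ≤ L) (hL1 : L < 1)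
    {m' : ℕ} (hm' : 1 ≤ m') :
    (L / (Δr * α)) * α * α + Δr * ((L / (Δr * α)) * (α * L ^ m' / (Δr * (1 - L))) * α)
      ≤ α * L ^ 1 / (Δr * (1 - L)) := by
  have h1L : 0 < 1 - L := by linarith
  have hΔ0 : 0 < Δr := by linarith
  have hα0 : 0 < α := by linarith
  have hpow : L ^ (1 + m') ≤ L ^ 2 := pow_le_pow_of_le_one hL0 hL1.le (by omega)
  have heq2 : Δr * ((L / (Δr * α)) * (α * L ^ m' / (Δr * (1 - L))) * α)
      = α * L ^ (1 + m') / (Δr * (1 - L)) := by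
    rw [pow_add, pow_one]
    field_simp
  have heq1 : (L / (Δr * α)) * α * α = α * L / Δr := by
    field_simp
  rw [heq1, heq2, pow_one]
  have hstep : α * L ^ (1 + m') / (Δr * (1 - L)) ≤ α * L ^ 2 / (Δr * (1 - L)) :=
    (div_le_div_iff_of_pos_right (by positivity)).mpr (mul_le_mul_of_nonneg_left hpow hα0.le)
  have heq3 : α * L / Δr + α * L ^ 2 / (Δr * (1 - L)) = α * L / (Δr * (1 - L)) := by
    field_simp
    ring
  linarith

/-! The doubly rooted bound -/

lemma support_eq_start_or_edge {G : SimpleGraph V} {a b c : V} (p : G.Walk a b)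
    (hc : c ∈ p.support) : c = a ∨ ∃ d ∈ p.edges, c ∈ d := by
  induction p with
  | nil => simp at hc; exact Or.inl hc
  | @cons x y z h q ih =>
    rw [SimpleGraph.Walk.support_cons, List.mem_cons] at hc
    rcases hc with h1 | h2
    · exact Or.inl h1
    · rcases ih h2 with h' | ⟨d, hd, hcd⟩
      · exact Or.inr ⟨s(x, y), by simp, by simp [h']⟩
      · exact Or.inr ⟨d, by simp [hd], hcd⟩

lemma Qsum_empty_ne {v₁ v₂ : V} {x : ℝ} (hne : v₁ ≠ v₂) :
    Qsum (∅ : Finset (Sym2 V)) v₁ v₂ x = 0 := by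
  have : Qset (∅ : Finset (Sym2 V)) v₁ v₂ = ∅ := by
    ext F
    simp only [Finset.notMem_empty, iff_false, mem_Qset]
    rintro ⟨hFE, -, -, hsup⟩
    have : F = ∅ := Finset.subset_empty.mp hFE
    subst this
    rcases hsup with h | h
    · simp [edgeSupp] at h
    · exact hne h
  rw [Qsum, this]
  simp

lemma R_alpha (Δ : ℕ) {x α : ℝ} (hx : 0 ≤ x) (hα : 1 ≤ α)
    (hxa : (1 + x * α) ^ Δ ≤ α) (E : Finset (Sym2 V)) (hdiag : ∀ e ∈ E, ¬ e.IsDiag)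
    (hdeg : ∀ w : V, (E.filter (fun d => w ∈ d)).card ≤ Δ) (v : V) :
    Qsum E v v x ≤ α := by
  have hbase : (1:ℝ) ≤ 1 + x * α := by nlinarith
  refine le_trans (R_bound Δ hx hα hxa E.card E le_rfl hdiag hdeg v) (le_trans ?_ hxa)
  exact pow_le_pow_right₀ hbase (hdeg v)

lemma P_bound (Δ : ℕ) (hΔ : 1 ≤ Δ) {x α L : ℝ} (hx : 0 ≤ x) (hα : 1 ≤ α)
    (hL0 : 0 ≤ L) (hL1 : L < 1)
    (hxa : (1 + x * α) ^ Δ ≤ α) (hxeq : x = L / (Δ * α)) :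
    ∀ n (E : Finset (Sym2 V)), E.card ≤ n → (∀ e ∈ E, ¬ e.IsDiag) →
      (∀ w : V, (E.filter (fun d => w ∈ d)).card ≤ Δ) →
      ∀ v₁ v₂ : V, v₁ ≠ v₂ → ∀ g : ℕ,
      (∀ p : (egr E).Walk v₁ v₂, p.IsPath → g < p.support.length) →
      Qsum E v₁ v₂ x ≤ α * L ^ (max g 1) / (Δ * (1 - L)) := by
  have hΔr : (1:ℝ) ≤ (Δ:ℝ) := by exact_mod_cast hΔ
  have hΔ0 : (0:ℝ) < (Δ:ℝ) := by linarith
  have hα0 : (0:ℝ) < α := by linarith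
  have h1L : (0:ℝ) < 1 - L := by linarith
  intro n
  induction n with
  | zero =>
    intro E hcard _ _ v₁ v₂ hne g _
    have : E = ∅ := Finset.card_eq_zero.mp (Nat.le_zero.mp hcard)
    subst this
    rw [Qsum_empty_ne hne]
    positivity
  | succ n ih =>
    intro E hcard hdiag hdeg v₁ v₂ hne g hpath
    set E' := E.filter (fun d => v₁ ∉ d) with hE'def
    have hdiag' : ∀ d ∈ E', ¬ d.IsDiag := fun d hd => hdiag d (Finset.mem_filter.mp hd).1
    have hdeg' : ∀ w : V, (E'.filter (fun d => w ∈ d)).card ≤ Δ :=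
      fun w => le_trans (Finset.card_le_card
        (Finset.filter_subset_filter _ (Finset.filter_subset _ _))) (hdeg w)
    set N := Finset.univ.filter (fun u => s(v₁, u) ∈ E ∧ v₁ ≠ u) with hNdef
    have hNcard : N.card ≤ Δ := by
      refine le_trans (Finset.card_le_card_of_injOn (fun u => s(v₁, u)) ?_ ?_) (hdeg v₁)
      · intro u hu
        exact Finset.mem_filter.mpr ⟨(Finset.mem_filter.mp hu).2.1, by simp⟩
      · intro a ha b hb hab
        rcases Sym2.eq_iff.mp hab with h | h
        · exact h.2
        · have hv1a : v₁ ≠ a := (Finset.mem_filter.mp ha).2.2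
          exact absurd h.2.symm hv1a
    have hE'card : ∀ u ∈ N, E'.card ≤ n := by
      intro u hu
      have heE : s(v₁, u) ∈ E := (Finset.mem_filter.mp hu).2.1
      have hss : E' ⊂ E := by
        refine Finset.ssubset_iff_of_subset (Finset.filter_subset _ _) |>.mpr ?_
        exact ⟨s(v₁, u), heE, by simp⟩
      have := Finset.card_lt_card hss
      omega
    -- path hypothesis transfer
    have hpath' : ∀ u ∈ N, ∀ q : (egr E').Walk u v₂, q.IsPath → g - 1 < q.support.length := by
      intro u hu q hq
      have hvu : v₁ ≠ u := (Finset.mem_filter.mp hu).2.2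
      have hv1q : v₁ ∉ q.support := by
        intro hmem
        rcases support_eq_start_or_edge q hmem with h | ⟨d, hd, hv1d⟩
        · exact hvu h
        · have hds : d ∈ (egr E').edgeSet := q.edges_subset_edgeSet hd
          rw [egr, SimpleGraph.edgeSet_fromEdgeSet] at hds
          have : d ∈ E' := by exact_mod_cast hds.1
          exact (Finset.mem_filter.mp this).2 hv1d
      have hqE : ∀ d ∈ q.edges, d ∈ (egr E).edgeSet := by
        intro d hd
        have h1 : d ∈ (egr E').edgeSet := q.edges_subset_edgeSet hd
        rw [egr, SimpleGraph.edgeSet_fromEdgeSet] at h1 ⊢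
        have : d ∈ E' := by exact_mod_cast h1.1
        refine ⟨?_, h1.2⟩
        exact_mod_cast (Finset.mem_filter.mp this).1
      have hadj : (egr E).Adj v₁ u := egr_adj.mpr ⟨(Finset.mem_filter.mp hu).2.1, hvu⟩
      have hq'path : (q.transfer (egr E) hqE).IsPath := hq.transfer _
      have hbig := hpath (SimpleGraph.Walk.cons hadj (q.transfer (egr E) hqE))
        ((SimpleGraph.Walk.cons_isPath_iff hadj _).mpr
          ⟨hq'path, by rwa [SimpleGraph.Walk.support_transfer]⟩)
      rw [SimpleGraph.Walk.support_cons, List.length_cons,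
        SimpleGraph.Walk.support_transfer] at hbig
      have hpos : 1 ≤ q.support.length := by
        rw [SimpleGraph.Walk.length_support]
        omega
      omega
    have hRE : Qsum E v₁ v₁ x ≤ α := R_alpha Δ hx hα hxa E hdiag hdeg v₁
    have hstep := Qsum_P_step hx E v₁ v₂ hne
    set K' := α * L ^ (max (g - 1) 1) / ((Δ:ℝ) * (1 - L)) with hK'def
    have hK'0 : 0 ≤ K' := by positivity
    have hterm1 : ∀ u ∈ N.erase v₂,
        x * Qsum E' u v₂ x * Qsum E v₁ v₁ x ≤ x * K' * α := by
      intro u hu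
      have huN : u ∈ N := Finset.mem_of_mem_erase hu
      have huv2 : u ≠ v₂ := Finset.ne_of_mem_erase hu
      have hQ' : Qsum E' u v₂ x ≤ K' :=
        ih E' (hE'card u huN) hdiag' hdeg' u v₂ huv2 (g - 1) (hpath' u huN)
      refine mul_le_mul (mul_le_mul_of_nonneg_left hQ' hx) hRE (Qsum_nonneg hx) ?_
      positivity
    have hsum1 : ∑ u ∈ N.erase v₂, x * Qsum E' u v₂ x * Qsum E v₁ v₁ x
        ≤ (Δ:ℝ) * (x * K' * α) := by
      refine le_trans (Finset.sum_le_card_nsmul _ _ _ hterm1) ?_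
      rw [nsmul_eq_mul]
      have hc : ((N.erase v₂).card : ℝ) ≤ (Δ:ℝ) := by
        have h1 : (N.erase v₂).card ≤ N.card := Finset.card_le_card (Finset.erase_subset _ _)
        exact_mod_cast le_trans h1 hNcard
      refine mul_le_mul_of_nonneg_right hc ?_
      positivity
    have hmaxle : max g 1 ≤ 1 + max (g - 1) 1 := by omega
    by_cases hv2N : v₂ ∈ N
    · -- edge v₁ v₂ present: g ≤ 1
      have heE : s(v₁, v₂) ∈ E := (Finset.mem_filter.mp hv2N).2.1
      have hadj : (egr E).Adj v₁ v₂ := egr_adj.mpr ⟨heE, hne⟩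
      have hg1 : g < 2 := by
        have hp2 := hpath (SimpleGraph.Walk.cons hadj SimpleGraph.Walk.nil)
          ((SimpleGraph.Walk.cons_isPath_iff hadj _).mpr
            ⟨SimpleGraph.Walk.IsPath.nil, by simp [hne]⟩)
        simpa using hp2
      have hmax1 : max g 1 = 1 := by omega
      have hterm2 : x * Qsum E' v₂ v₂ x * Qsum E v₁ v₁ x ≤ x * α * α := by
        have hQ2 : Qsum E' v₂ v₂ x ≤ α := R_alpha Δ hx hα hxa E' hdiag' hdeg' v₂
        refine mul_le_mul (mul_le_mul_of_nonneg_left hQ2 hx) hRE (Qsum_nonneg hx) ?_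
        positivity
      have hsplitN : ∑ u ∈ N, x * Qsum E' u v₂ x * Qsum E v₁ v₁ x
          = x * Qsum E' v₂ v₂ x * Qsum E v₁ v₁ x
            + ∑ u ∈ N.erase v₂, x * Qsum E' u v₂ x * Qsum E v₁ v₁ x :=
        (Finset.add_sum_erase N _ hv2N).symm
      rw [hmax1]
      calc Qsum E v₁ v₂ x
          ≤ ∑ u ∈ N, x * Qsum E' u v₂ x * Qsum E v₁ v₁ x := hstep
        _ ≤ x * α * α + (Δ:ℝ) * (x * K' * α) := by
            rw [hsplitN]; linarith
        _ ≤ α * L ^ 1 / ((Δ:ℝ) * (1 - L)) := by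
            rw [hxeq, hK'def]
            exact arithA hΔr hα hL0 hL1 (le_max_right _ _)
    · have herase : N.erase v₂ = N := Finset.erase_eq_of_notMem hv2N
      calc Qsum E v₁ v₂ x
          ≤ ∑ u ∈ N, x * Qsum E' u v₂ x * Qsum E v₁ v₁ x := hstep
        _ ≤ (Δ:ℝ) * (x * K' * α) := by rw [← herase]; exact hsum1
        _ ≤ α * L ^ (max g 1) / ((Δ:ℝ) * (1 - L)) := by
            rw [hxeq, hK'def]
            exact arithB hΔr hα hL0 hL1 hmaxle

/-! Main theorem -/

/-- If moreover every path between `v₁` and `v₂` has more than `g` vertices, then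
`T_{G,v₁,v₂}(ln α/(αΔ)) ≤ (ln α)^{g-1} · α ln α / (Δ(1 - ln α))`. -/
theorem treeSum2_girth_le (G : SimpleGraph V) (Δ : ℕ) (hΔ : 1 ≤ Δ)
    (hdeg : ∀ w : V, G.degree w ≤ Δ) (v₁ v₂ : V) (hne : v₁ ≠ v₂) (g : ℕ)
    (hpath : ∀ p : G.Walk v₁ v₂, p.IsPath → g < p.support.length)
    (α : ℝ) (hα : 1 ≤ α) (hα' : α < Real.exp 1) :
    treeSum2 G v₁ v₂ (Real.log α / (α * Δ)) ≤
      (Real.log α) ^ (g - 1) * (α * Real.log α / (Δ * (1 - Real.log α))) := by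
  set L := Real.log α with hLdef
  have hα0 : (0:ℝ) < α := by linarith
  have hL0 : 0 ≤ L := Real.log_nonneg hα
  have hL1 : L < 1 := by
    have h := Real.log_lt_log hα0 hα'
    rwa [Real.log_exp] at h
  have hΔr : (1:ℝ) ≤ (Δ:ℝ) := by exact_mod_cast hΔ
  have hΔ0 : (0:ℝ) < (Δ:ℝ) := by linarith
  set x := L / (α * (Δ:ℝ)) with hxdef
  have hx : 0 ≤ x := by positivity
  have hxeq : x = L / ((Δ:ℝ) * α) := by rw [hxdef, mul_comm]
  have hxa : (1 + x * α) ^ Δ ≤ α := by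
    have hxα : x * α = L / Δ := by rw [hxdef]; field_simp
    rw [hxα]
    have h1 : 1 + L / Δ ≤ Real.exp (L / Δ) := by
      have := Real.add_one_le_exp (L / (Δ:ℝ))
      linarith
    have h2 : (1 + L / (Δ:ℝ)) ^ Δ ≤ (Real.exp (L / Δ)) ^ Δ :=
      pow_le_pow_left₀ (by positivity) h1 Δ
    have h3 : (Real.exp (L / Δ)) ^ Δ = Real.exp L := by
      rw [← Real.exp_nat_mul]
      congr 1
      field_simp
    rw [h3] at h2
    have h4 : Real.exp L = α := Real.exp_log hα0
    linarith
  have hEG : egr G.edgeFinset = G := by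
    rw [egr, SimpleGraph.coe_edgeFinset, SimpleGraph.fromEdgeSet_edgeSet]
  have hdiagE : ∀ e ∈ G.edgeFinset, ¬ e.IsDiag := by
    intro e he
    rw [SimpleGraph.mem_edgeFinset] at he
    exact SimpleGraph.not_isDiag_of_mem_edgeSet G he
  have hdegE : ∀ w : V, (G.edgeFinset.filter (fun d => w ∈ d)).card ≤ Δ := by
    intro w
    have hinc : G.edgeFinset.filter (fun d => w ∈ d) = G.incidenceFinset w := by
      ext e
      simp only [Finset.mem_filter, SimpleGraph.mem_edgeFinset,
        SimpleGraph.mem_incidenceFinset, SimpleGraph.incidenceSet, Set.mem_setOf_eq]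
    rw [hinc, SimpleGraph.card_incidenceFinset_eq_degree]
    exact hdeg w
  have hpathE : ∀ p : (egr G.edgeFinset).Walk v₁ v₂, p.IsPath → g < p.support.length := by
    intro p hp
    have hsub : ∀ d ∈ p.edges, d ∈ G.edgeSet := by
      intro d hd
      have h := p.edges_subset_edgeSet hd
      rwa [hEG] at h
    have h := hpath (p.transfer G hsub) (hp.transfer _)
    rwa [SimpleGraph.Walk.support_transfer] at h
  have hset : G.edgeFinset.powerset.filter
      (fun F => IsSubtree G F ∧ v₁ ∈ edgeSupp F ∧ v₂ ∈ edgeSupp F)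
      = Qset G.edgeFinset v₁ v₂ := by
    ext F
    rw [Finset.mem_filter, Finset.mem_powerset]
    simp only [Finset.mem_filter, Finset.mem_powerset, mem_Qset, IsSubtree, Good, egr]
    constructor
    · rintro ⟨hFE, ⟨-, hac, hconn⟩, h1, h2⟩
      refine ⟨hFE, ⟨?_, hac, hconn⟩, Or.inr h1, Or.inl h2⟩
      intro e he
      have h := hFE he
      rw [SimpleGraph.mem_edgeFinset] at h
      exact SimpleGraph.not_isDiag_of_mem_edgeSet G h
    · rintro ⟨hFE, ⟨-, hac, hconn⟩, h1, h2⟩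
      have h2' : v₂ ∈ edgeSupp F := h2.resolve_right hne
      have hFne : F ≠ ∅ := by
        obtain ⟨d, hd, -⟩ := mem_edgeSupp.mp h2'
        intro h; rw [h] at hd; simp at hd
      exact ⟨hFE, ⟨hFE, hac, hconn⟩, h1.resolve_left hFne, h2'⟩
  have htree : treeSum2 G v₁ v₂ x = Qsum G.edgeFinset v₁ v₂ x := by
    rw [treeSum2, hset, Qsum]
  have hmain := P_bound Δ hΔ hx hα hL0 hL1 hxa hxeq G.edgeFinset.card G.edgeFinset
    le_rfl hdiagE hdegE v₁ v₂ hne g hpathE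
  rw [htree]
  refine le_trans hmain (le_of_eq ?_)
  have hmax : max g 1 = (g - 1) + 1 := by omega
  rw [hmax, pow_succ]
  ring
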